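/- Let G be a path or cycle graph, and let V' be a subset of V(G) such that G[V'] is connected. Let V' be partitioned into V_1 and V_2. Then cc(V_1) ≤ cc(V_2) + 1, where cc denotes the number of connected components of the induced subgraph. -/

import Mathlib

/-- A set of vertices is independent: no two of its vertices are adjacent. -/
def IsIndep {V : Type*} (G : SimpleGraph V) (I : Set V) : Prop :=
  ∀ ⦃a⦄, a ∈ I → ∀ ⦃b⦄, b ∈ I → ¬ G.Adj a b

/-- The number of connected components of the subgraph induced by `S`. -/
noncomputable def cc {V : Type*} (G : SimpleGraph V) (S : Set V) : ℕ :=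
  Nat.card (G.induce S).ConnectedComponent

open SimpleGraph

/-- Along a walk in the induced subgraph of a path graph, every intermediate
vertex belongs to the set. -/
lemma walk_interval {n : ℕ} {S : Set (Fin n)} {k : Fin n} {x y : ↥S}
    (w : ((pathGraph n).induce S).Walk x y) :
    ∀ _ : (x : Fin n).val ≤ k.val, k.val ≤ (y : Fin n).val → k ∈ S := by
  induction w with
  | nil =>
    intro h1 h2
    rename_i u
    have : k = (u : Fin n) := Fin.ext (le_antisymm h2 h1)
    exact this ▸ u.2
  | @cons u v _ h p ih =>
    intro h1 h2
    by_cases hk : (u : Fin n).val = k.val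
    · exact (Fin.ext hk.symm : k = (u : Fin n)) ▸ u.2
    · have h1' : (u : Fin n).val < k.val := lt_of_le_of_ne h1 hk
      have hadj : (pathGraph n).Adj u v := h
      rw [pathGraph_adj] at hadj
      exact ih (by omega) h2

lemma mem_of_reachable_path {n : ℕ} {S : Set (Fin n)} {k : Fin n} {x y : ↥S}
    (h : ((pathGraph n).induce S).Reachable x y)
    (h1 : (x : Fin n).val ≤ k.val) (h2 : k.val ≤ (y : Fin n).val) : k ∈ S :=
  h.elim fun w => walk_interval w h1 h2

/-- The path-graph case of the main theorem. -/
lemma path_case {n : ℕ} (V₁ V₂ : Set (Fin n)) (hdisj : Disjoint V₁ V₂)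
    (hconn : ((pathGraph n).induce (V₁ ∪ V₂)).Connected) :
    cc (pathGraph n) V₁ ≤ cc (pathGraph n) V₂ + 1 := by
  classical
  set P := pathGraph n with hP
  have hKne : ∀ c : (P.induce V₁).ConnectedComponent,
      ((Set.toFinite {v : Fin n | ∃ h : v ∈ V₁,
        (P.induce V₁).connectedComponentMk ⟨v, h⟩ = c}).toFinset).Nonempty := by
    intro c
    obtain ⟨⟨v, hv⟩, hc⟩ := c.exists_rep
    exact ⟨v, by simp only [Set.Finite.mem_toFinset, Set.mem_setOf_eq]; exact ⟨hv, hc⟩⟩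
  set m : (P.induce V₁).ConnectedComponent → Fin n :=
    fun c => Finset.max' _ (hKne c) with hm
  have hmem : ∀ c, ∃ h : m c ∈ V₁, (P.induce V₁).connectedComponentMk ⟨m c, h⟩ = c := by
    intro c
    have := Finset.max'_mem _ (hKne c)
    rwa [Set.Finite.mem_toFinset, Set.mem_setOf_eq] at this
  have hle : ∀ c v (h : v ∈ V₁), (P.induce V₁).connectedComponentMk ⟨v, h⟩ = c →
      v.val ≤ (m c).val := by
    intro c v h hc
    exact Finset.le_max' _ v (by rw [Set.Finite.mem_toFinset, Set.mem_setOf_eq]; exact ⟨h, hc⟩)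
  -- successor of the max of a component is not in V₁
  have hsucc : ∀ c (hlt : (m c).val + 1 < n), (⟨(m c).val + 1, hlt⟩ : Fin n) ∉ V₁ := by
    intro c hlt hmem1
    obtain ⟨h1, hc1⟩ := hmem c
    have hadj : (P.induce V₁).Adj ⟨m c, h1⟩ ⟨⟨(m c).val + 1, hlt⟩, hmem1⟩ := by
      show P.Adj _ _
      rw [hP, pathGraph_adj]; left; rfl
    have h2 : (m c).val + 1 ≤ (m c).val :=
      hle c _ hmem1
        ((SimpleGraph.ConnectedComponent.connectedComponentMk_eq_of_adj hadj).symm.trans hc1)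
    omega
  -- the union is an "interval" set
  have hS : ∀ x y k : Fin n, x ∈ V₁ ∪ V₂ → y ∈ V₁ ∪ V₂ → x.val ≤ k.val → k.val ≤ y.val →
      k ∈ V₁ ∪ V₂ := by
    intro x y k hx hy h1 h2
    exact mem_of_reachable_path (x := ⟨x, hx⟩) (y := ⟨y, hy⟩)
      (hconn.preconnected _ _) h1 h2
  -- the map from components of V₁ to components of V₂ (plus one extra value)
  set f : (P.induce V₁).ConnectedComponent → Option ((P.induce V₂).ConnectedComponent) :=
    fun c =>
      if h : ∃ hlt : (m c).val + 1 < n, (⟨(m c).val + 1, hlt⟩ : Fin n) ∈ V₂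
      then some ((P.induce V₂).connectedComponentMk ⟨⟨(m c).val + 1, h.choose⟩, h.choose_spec⟩)
      else none
    with hf
  have hfpos : ∀ c (hlt : (m c).val + 1 < n) (h2 : (⟨(m c).val + 1, hlt⟩ : Fin n) ∈ V₂),
      f c = some ((P.induce V₂).connectedComponentMk ⟨⟨(m c).val + 1, hlt⟩, h2⟩) := by
    intro c hlt h2
    simp only [hf]
    rw [dif_pos ⟨hlt, h2⟩]
  have hfneg : ∀ c, ¬ (∃ hlt : (m c).val + 1 < n, (⟨(m c).val + 1, hlt⟩ : Fin n) ∈ V₂) →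
      f c = none := by
    intro c h
    simp only [hf]
    rw [dif_neg h]
  have key : ∀ c c', (m c).val < (m c').val → f c = f c' → False := by
    intro c c' hlt hfe
    obtain ⟨h1, hc1⟩ := hmem c
    obtain ⟨h1', hc1'⟩ := hmem c'
    have hlt1 : (m c).val + 1 < n := lt_of_le_of_lt hlt (m c').isLt
    have hsS : (⟨(m c).val + 1, hlt1⟩ : Fin n) ∈ V₁ ∪ V₂ :=
      hS (m c) (m c') _ (Or.inl h1) (Or.inl h1') (Nat.le_succ _) hlt
    have hsV2 : (⟨(m c).val + 1, hlt1⟩ : Fin n) ∈ V₂ := hsS.resolve_left (hsucc c hlt1)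
    rw [hfpos c hlt1 hsV2] at hfe
    by_cases h' : ∃ hlt' : (m c').val + 1 < n, (⟨(m c').val + 1, hlt'⟩ : Fin n) ∈ V₂
    · obtain ⟨hlt1', hsV2'⟩ := h'
      rw [hfpos c' hlt1' hsV2'] at hfe
      have heq := Option.some.inj hfe
      have hreach : ((P.induce V₂)).Reachable ⟨⟨(m c).val + 1, hlt1⟩, hsV2⟩
          ⟨⟨(m c').val + 1, hlt1'⟩, hsV2'⟩ := (SimpleGraph.ConnectedComponent.eq).mp heq
      have hmem2 : (m c') ∈ V₂ := mem_of_reachable_path hreach hlt (Nat.le_succ _)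
      exact Set.disjoint_left.mp hdisj h1' hmem2
    · rw [hfneg c' h'] at hfe
      simp at hfe
  have finj : Function.Injective f := by
    intro c c' hfe
    by_contra hne
    have hmne : (m c).val ≠ (m c').val := by
      intro hmeq
      obtain ⟨h1, hc1⟩ := hmem c
      obtain ⟨h1', hc1'⟩ := hmem c'
      apply hne
      rw [← hc1, ← hc1']
      congr 1
      exact Subtype.ext (Fin.ext hmeq)
    rcases lt_or_gt_of_ne hmne with h | h
    · exact absurd hfe (fun he => key c c' h he)
    · exact absurd hfe.symm (fun he => key c' c h he)
  have hfin2 : Finite ((P.induce V₂).ConnectedComponent) :=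
    Finite.of_surjective (P.induce V₂).connectedComponentMk
      (fun c => c.exists_rep)
  calc cc P V₁ = Nat.card ((P.induce V₁).ConnectedComponent) := rfl
    _ ≤ Nat.card (Option ((P.induce V₂).ConnectedComponent)) :=
        Nat.card_le_card_of_injective f finj
    _ = Nat.card ((P.induce V₂).ConnectedComponent) + 1 := Finite.card_option
    _ = cc P V₂ + 1 := rfl

/-- Rotation is an automorphism of the cycle graph. -/
def rotIso (m : ℕ) (k : Fin (m + 1)) : cycleGraph (m + 1) ≃g cycleGraph (m + 1) where
  toEquiv := Equiv.addRight k
  map_rel_iff' := by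
    intro a b
    simp only [Equiv.coe_addRight, cycleGraph_adj', add_sub_add_right_eq_sub]

/-- An isomorphism restricts to induced subgraphs. -/
def induceIso {V W : Type*} {G : SimpleGraph V} {G' : SimpleGraph W} (e : G ≃g G')
    (S : Set V) : G.induce S ≃g G'.induce (e.toEquiv '' S) where
  toEquiv := e.toEquiv.image S
  map_rel_iff' := by
    intro a b
    simp only [Equiv.image, Equiv.coe_fn_mk, comap_adj, Function.Embedding.coe_subtype]
    exact e.map_adj_iff

lemma cc_image {V W : Type*} {G : SimpleGraph V} {G' : SimpleGraph W} (e : G ≃g G')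
    (S : Set V) : cc G' (e.toEquiv '' S) = cc G S :=
  Nat.card_congr ((induceIso e S).connectedComponentEquiv).symm

/-- If the pair `{0, n-1}` is not inside `S`, the cycle and path graphs induce the
same graph on `S`. -/
lemma induce_cycle_eq_path {n : ℕ} (S : Set (Fin n))
    (h : ∀ a ∈ S, ∀ b ∈ S, ¬ (a.val = 0 ∧ b.val = n - 1)) :
    (cycleGraph n).induce S = (pathGraph n).induce S := by
  have hdir : ∀ u, u ∈ S → ∀ v, v ∈ S → (((v - u : Fin n)).val = 1 ↔ u.val + 1 = v.val) := by
    intro u hu v hv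
    have hn : 0 < n := u.pos
    have hu' := u.isLt
    have hv' := v.isLt
    have hsub : (v - u).val = (n - u.val + v.val) % n := by rw [Fin.sub_def]
    rw [hsub]
    constructor
    · intro h1
      by_cases hu1 : u.val + 1 < n
      · by_cases htn : n - u.val + v.val < n
        · rw [Nat.mod_eq_of_lt htn] at h1; omega
        · rw [Nat.mod_eq_sub_mod (by omega), Nat.mod_eq_of_lt (by omega)] at h1
          omega
      · exfalso
        have hueq : u.val = n - 1 := by omega
        have h1' : (1 + v.val) % n = 1 := by
          have he : n - u.val + v.val = 1 + v.val := by omega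
          rwa [he] at h1
        by_cases hv1 : v.val + 1 < n
        · rw [Nat.mod_eq_of_lt (by omega)] at h1'
          exact h v hv u hu ⟨by omega, hueq⟩
        · rw [show 1 + v.val = n from by omega, Nat.mod_self] at h1'
          omega
    · intro h1
      rw [show n - u.val + v.val = n + 1 from by omega,
        Nat.mod_eq_sub_mod (by omega), show n + 1 - n = 1 from by omega,
        Nat.mod_eq_of_lt (by omega)]
  ext a b
  show (cycleGraph n).Adj a.val b.val ↔ (pathGraph n).Adj a.val b.val
  rw [cycleGraph_adj', pathGraph_adj]
  rw [hdir b.val b.2 a.val a.2, hdir a.val a.2 b.val b.2]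
  exact or_comm

/-- The cycle case, assuming the "wrap-around" pair is in neither `W₁` nor `W₂`. -/
lemma cycle_nowrap {m : ℕ} (W₁ W₂ : Set (Fin (m + 1))) (hdisj : Disjoint W₁ W₂)
    (h1 : ∀ a ∈ W₁, ∀ b ∈ W₁, ¬ (a.val = 0 ∧ b.val = m))
    (h2 : ∀ a ∈ W₂, ∀ b ∈ W₂, ¬ (a.val = 0 ∧ b.val = m))
    (hconn : ((pathGraph (m + 1)).induce (W₁ ∪ W₂)).Connected) :
    cc (cycleGraph (m + 1)) W₁ ≤ cc (cycleGraph (m + 1)) W₂ + 1 := by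
  have e1 : (cycleGraph (m + 1)).induce W₁ = (pathGraph (m + 1)).induce W₁ :=
    induce_cycle_eq_path W₁ h1
  have e2 : (cycleGraph (m + 1)).induce W₂ = (pathGraph (m + 1)).induce W₂ :=
    induce_cycle_eq_path W₂ h2
  have := path_case W₁ W₂ hdisj hconn
  unfold cc at this ⊢
  rw [e1, e2]
  exact this

/-- On a path or a cycle, if `G[V₁ ∪ V₂]` is connected with `V₁` and `V₂` disjoint, then
`cc(V₁) ≤ cc(V₂) + 1`. -/
theorem stmt_10 {n : ℕ} (G : SimpleGraph (Fin n))
    (hG : G = SimpleGraph.pathGraph n ∨ G = SimpleGraph.cycleGraph n)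
    (V₁ V₂ : Set (Fin n)) (hdisj : Disjoint V₁ V₂)
    (hconn : (G.induce (V₁ ∪ V₂)).Connected) :
    cc G V₁ ≤ cc G V₂ + 1 := by
  classical
  obtain rfl | rfl := hG
  · exact path_case V₁ V₂ hdisj hconn
  · have hn : 0 < n := (hconn.nonempty.some : ↥(V₁ ∪ V₂)).val.pos
    obtain ⟨m, rfl⟩ : ∃ m, n = m + 1 := ⟨n - 1, by omega⟩
    by_cases hV1 : V₁ = ∅
    · have hz : cc (cycleGraph (m + 1)) V₁ = 0 := by
        have : IsEmpty ((cycleGraph (m + 1)).induce V₁).ConnectedComponent := by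
          constructor
          intro c
          obtain ⟨⟨v, hv⟩, -⟩ := c.exists_rep
          rw [hV1] at hv
          exact hv
        simp [cc, Nat.card_of_isEmpty]
      omega
    by_cases hV2 : V₂ = ∅
    · rw [hV2, Set.union_empty] at hconn
      have h1 : cc (cycleGraph (m + 1)) V₁ = 1 := by
        unfold cc
        rw [Nat.card_eq_one_iff_unique]
        refine ⟨⟨fun a b => ?_⟩, ⟨((cycleGraph (m + 1)).induce V₁).connectedComponentMk
          hconn.nonempty.some⟩⟩
        refine SimpleGraph.ConnectedComponent.ind₂ (fun u v => ?_) a b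
        exact SimpleGraph.ConnectedComponent.sound (hconn.preconnected u v)
      omega
    by_cases huniv : V₁ ∪ V₂ = Set.univ
    · -- find a boundary vertex
      obtain ⟨z, hz2, hz1⟩ : ∃ z, z ∈ V₂ ∧ z + 1 ∈ V₁ := by
        by_contra hno
        push_neg at hno
        have hstep : ∀ z, z ∈ V₂ → z + 1 ∈ V₂ := by
          intro z hz
          have : z + 1 ∈ V₁ ∪ V₂ := huniv ▸ Set.mem_univ _
          exact this.resolve_left (hno z hz)
        obtain ⟨z₀, hz₀⟩ := Set.nonempty_iff_ne_empty.mpr hV2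
        open Fin.CommRing in
        have hiter : ∀ k : ℕ, z₀ + (k : Fin (m + 1)) ∈ V₂ := by
          intro k
          induction k with
          | zero => simpa using hz₀
          | succ k ih =>
            have : ((k + 1 : ℕ) : Fin (m + 1)) = (k : Fin (m + 1)) + 1 := by push_cast; ring
            rw [this, ← add_assoc]
            exact hstep _ ih
        open Fin.CommRing in
        have hall : ∀ w : Fin (m + 1), w ∈ V₂ := by
          intro w
          have := hiter ((w - z₀).val)
          rwa [Fin.cast_val_eq_self, show z₀ + (w - z₀) = w from by abel] at this
        obtain ⟨x, hx⟩ := Set.nonempty_iff_ne_empty.mpr hV1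
        exact Set.disjoint_left.mp hdisj hx (hall x)
      set e := rotIso m (Fin.last m - z) with he
      set W₁ := e.toEquiv '' V₁ with hW1
      set W₂ := e.toEquiv '' V₂ with hW2
      have hez : e.toEquiv z = Fin.last m := by
        show z + (Fin.last m - z) = Fin.last m
        abel
      have hez1 : e.toEquiv (z + 1) = 0 := by
        show z + 1 + (Fin.last m - z) = 0
        have : z + 1 + (Fin.last m - z) = Fin.last m + 1 := by abel
        rw [this, Fin.last_add_one]
      have hlastW : Fin.last m ∈ W₂ := ⟨z, hz2, hez⟩
      have h0W : (0 : Fin (m + 1)) ∈ W₁ := ⟨z + 1, hz1, hez1⟩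
      have hdisjW : Disjoint W₁ W₂ :=
        (Set.disjoint_image_iff e.toEquiv.injective).mpr hdisj
      have hWuniv : W₁ ∪ W₂ = Set.univ := by
        rw [hW1, hW2, ← Set.image_union, huniv, Set.image_univ, Equiv.range_eq_univ]
      have hconnW : ((pathGraph (m + 1)).induce (W₁ ∪ W₂)).Connected := by
        rw [hWuniv]
        exact (induceUnivIso (pathGraph (m + 1))).connected_iff.mpr (pathGraph_connected m)
      have hc := cycle_nowrap W₁ W₂ hdisjW
        (fun a ha b hb hab => Set.disjoint_left.mp hdisjW hb
          (show b ∈ W₂ from (Fin.ext hab.2 : b = Fin.last m) ▸ hlastW))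
        (fun a ha b hb hab => Set.disjoint_left.mp hdisjW h0W
          ((Fin.ext hab.1 : a = 0) ▸ ha))
        hconnW
      rwa [hW1, hW2, cc_image, cc_image] at hc
    · obtain ⟨z, hz⟩ := (Set.ne_univ_iff_exists_notMem _).mp huniv
      set e := rotIso m (Fin.last m - z) with he
      set W₁ := e.toEquiv '' V₁ with hW1
      set W₂ := e.toEquiv '' V₂ with hW2
      have hez : e.toEquiv z = Fin.last m := by
        show z + (Fin.last m - z) = Fin.last m
        abel
      have hlast : ∀ w ∈ W₁ ∪ W₂, w ≠ Fin.last m := by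
        rintro w hw hcon
        rw [hW1, hW2, ← Set.image_union] at hw
        obtain ⟨x, hx, rfl⟩ := hw
        exact hz ((e.toEquiv.injective (hcon.trans hez.symm)) ▸ hx)
      have hdisjW : Disjoint W₁ W₂ :=
        (Set.disjoint_image_iff e.toEquiv.injective).mpr hdisj
      have hconnW : ((pathGraph (m + 1)).induce (W₁ ∪ W₂)).Connected := by
        have h1 : ((cycleGraph (m + 1)).induce (e.toEquiv '' (V₁ ∪ V₂))).Connected :=
          (induceIso e (V₁ ∪ V₂)).connected_iff.mp hconn
        rw [Set.image_union] at h1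
        rwa [induce_cycle_eq_path _ (fun a ha b hb hab =>
          hlast b hb (Fin.ext hab.2))] at h1
      have hc := cycle_nowrap W₁ W₂ hdisjW
        (fun a ha b hb hab => hlast b (Or.inl hb) (Fin.ext hab.2))
        (fun a ha b hb hab => hlast b (Or.inr hb) (Fin.ext hab.2))
        hconnW
      rwa [hW1, hW2, cc_image, cc_image] at hc
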